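/- Let F be a field of characteristic different from 2, d a positive integer, and W a subspace of F^d. Then there exists a vector x in the orthogonal complement W^⊥ with ⟨x,x⟩ ≠ 0 if and only if W^⊥ is not contained in W. -/

import Mathlib

open LinearMap (BilinForm)

noncomputable def dotB (F : Type*) [Field F] (d : ℕ) : BilinForm F (Fin d → F) :=
  LinearMap.mk₂ F (fun x y => ∑ t, x t * y t)
    (fun x x' y => by simp [add_mul, Finset.sum_add_distrib])
    (fun c x y => by simp [Finset.mul_sum, mul_assoc])
    (fun x y y' => by simp [mul_add, Finset.sum_add_distrib])
    (fun c x y => by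
      simp only [Pi.smul_apply, smul_eq_mul, Finset.mul_sum]
      exact Finset.sum_congr rfl fun t _ => by ring)

@[simp] lemma dotB_apply {F : Type*} [Field F] {d : ℕ} (x y : Fin d → F) :
    dotB F d x y = ∑ t, x t * y t := rfl

lemma dotB_refl {F : Type*} [Field F] {d : ℕ} : (dotB F d).IsRefl := by
  intro x y h
  simpa [mul_comm] using h

lemma dotB_nondeg {F : Type*} [Field F] {d : ℕ} : (dotB F d).Nondegenerate := by
  refine ⟨?_, ?_⟩ <;>
  intro x hx <;>
  funext i <;>
  have := hx (Pi.single i 1) <;>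
  simpa [Pi.single_apply, Finset.sum_ite_eq, Finset.sum_ite_eq'] using this

/-- characteristic ≠ 2: W^⊥ has a non-self-orthogonal vector iff W^⊥ ⊄ W. -/
theorem stmt_1 (F : Type*) [Field F] (h2 : (2 : F) ≠ 0) (d : ℕ) (hd : 1 ≤ d)
    (W : Submodule F (Fin d → F)) :
    (∃ x : Fin d → F, (∀ y ∈ W, ∑ t, x t * y t = 0) ∧ ∑ t, x t * x t ≠ 0) ↔
      ∃ x : Fin d → F, (∀ y ∈ W, ∑ t, x t * y t = 0) ∧ x ∉ W := by
  constructor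
  · rintro ⟨x, hperp, hxx⟩
    exact ⟨x, hperp, fun hxW => hxx (hperp x hxW)⟩
  · rintro ⟨x, hperp, hxW⟩
    by_contra hall
    push_neg at hall
    have hmem : ∀ z : Fin d → F,
        (∀ y ∈ W, ∑ t, z t * y t = 0) ↔ z ∈ (dotB F d).orthogonal W := by
      intro z
      rw [LinearMap.BilinForm.mem_orthogonal_iff]
      constructor
      · intro h n hn
        show ∑ t, n t * z t = 0
        rw [show ∑ t, n t * z t = ∑ t, z t * n t from
          Finset.sum_congr rfl fun t _ => mul_comm _ _]
        exact h n hn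
      · intro h y hy
        have : ∑ t, y t * z t = 0 := h y hy
        rw [show ∑ t, z t * y t = ∑ t, y t * z t from
          Finset.sum_congr rfl fun t _ => mul_comm _ _]
        exact this
    have hiso : ∀ z ∈ (dotB F d).orthogonal W, dotB F d z z = 0 := by
      intro z hz
      exact hall z ((hmem z).mpr hz)
    have htot : (dotB F d).orthogonal W ≤ (dotB F d).orthogonal ((dotB F d).orthogonal W) := by
      intro u hu v hv
      show dotB F d v u = 0
      have h1 : dotB F d (u + v) (u + v) = 0 := hiso _ (add_mem hu hv)
      have huu := hiso u hu
      have hvv := hiso v hv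
      have hsymm : dotB F d u v = dotB F d v u := by
        simp only [dotB_apply]
        exact Finset.sum_congr rfl fun t _ => mul_comm _ _
      have h2' : (2 : F) * dotB F d v u = 0 := by
        have hexp : dotB F d (u + v) (u + v)
            = dotB F d u u + dotB F d u v + dotB F d v u + dotB F d v v := by
          simp only [map_add, LinearMap.add_apply]; ring
        rw [hexp, huu, hvv, hsymm] at h1
        linear_combination h1
      rcases mul_eq_zero.mp h2' with h | h
      · exact absurd h h2
      · exact h
    have hdouble : (dotB F d).orthogonal ((dotB F d).orthogonal W) = W :=
      LinearMap.BilinForm.orthogonal_orthogonal dotB_nondeg dotB_refl W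
    exact hxW (hdouble ▸ htot ((hmem x).mp hperp))
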